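/- arXiv:math/0502357 — 2 statements merged into one kernel-verified Lean document; each statement's English description precedes it below -/
import Mathlib

section
/- Suppose a signal S on ℤ/Nℤ is supported on B frequencies in its Fourier transform, and S₁(t) = S(t)·χ_T(t) where for every ω ≠ 0, |χ̂_T(ω)| ≤ √λ and χ̂_T(0) = 1 (Fourier transform normalized so that Ŝ₁ = Ŝ * χ̂_T as a convolution over ℤ/Nℤ). Then for every frequency ω, |Ŝ(ω) - Ŝ₁(ω)| ≤ √(Bλ)·‖S‖₂. -/
open Finset

/-- If `S` has Fourier support on a set `Ω` of `B` frequencies, `χ̂_T(0) = 1` and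
`|χ̂_T(ω)| ≤ √λ` for `ω ≠ 0`, and `Ŝ₁ = Ŝ * χ̂_T`, then for every frequency `ω`,
`|Ŝ(ω) - Ŝ₁(ω)| ≤ √(Bλ)·‖S‖₂`. -/
theorem stmt_4 (N B : ℕ) [NeZero N] (lam : ℝ) (hlam : 0 ≤ lam)
    (Shat : ZMod N → ℂ) (Ωs : Finset (ZMod N)) (hcard : Ωs.card = B)
    (hsupp : ∀ w : ZMod N, w ∉ Ωs → Shat w = 0)
    (χhat : ZMod N → ℂ)
    (hχ0 : χhat 0 = 1)
    (hχ : ∀ w : ZMod N, w ≠ 0 → ‖χhat w‖ ≤ Real.sqrt lam)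
    (S1hat : ZMod N → ℂ)
    (hS1 : ∀ w : ZMod N, S1hat w = ∑ w' ∈ Ωs, Shat w' * χhat (w - w'))
    (normS : ℝ) (hnorm : normS = Real.sqrt (∑ w ∈ Ωs, ‖Shat w‖ ^ 2)) :
    ∀ ω : ZMod N, ‖Shat ω - S1hat ω‖ ≤ Real.sqrt (B * lam) * normS := by
  intro ω
  have key : Shat ω - S1hat ω = -∑ w' ∈ Ωs.erase ω, Shat w' * χhat (ω - w') := by
    rw [hS1]
    by_cases hω : ω ∈ Ωs
    · rw [← Finset.add_sum_erase _ _ hω, sub_self ω, hχ0, mul_one]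
      ring
    · rw [hsupp ω hω, Finset.erase_eq_of_notMem hω]
      ring
  rw [key, norm_neg]
  calc ‖∑ w' ∈ Ωs.erase ω, Shat w' * χhat (ω - w')‖
      ≤ ∑ w' ∈ Ωs.erase ω, ‖Shat w' * χhat (ω - w')‖ := by
        exact norm_sum_le _ _
    _ ≤ ∑ w' ∈ Ωs.erase ω, ‖Shat w'‖ * Real.sqrt lam := by
        apply Finset.sum_le_sum
        intro w' hw'
        rw [norm_mul]
        exact mul_le_mul_of_nonneg_left
          (hχ _ (sub_ne_zero.mpr (Ne.symm (Finset.ne_of_mem_erase hw'))))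
          (norm_nonneg _)
    _ ≤ ∑ w' ∈ Ωs, ‖Shat w'‖ * Real.sqrt lam := by
        apply Finset.sum_le_sum_of_subset_of_nonneg (Finset.erase_subset _ _)
        intro i _ _; positivity
    _ = (∑ w' ∈ Ωs, ‖Shat w'‖) * Real.sqrt lam := by
        rw [Finset.sum_mul]
    _ ≤ Real.sqrt (B * lam) * normS := by
        have hB : (∑ w' ∈ Ωs, ‖Shat w'‖) ≤ Real.sqrt B * normS := by
          rw [hnorm]
          have h := sq_sum_le_card_mul_sum_sq (s := Ωs)
            (f := fun w => ‖Shat w‖)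
          rw [hcard] at h
          have h1 : (∑ w' ∈ Ωs, ‖Shat w'‖) =
              Real.sqrt ((∑ w' ∈ Ωs, ‖Shat w'‖) ^ 2) := by
            rw [Real.sqrt_sq (by positivity)]
          rw [h1, ← Real.sqrt_mul (by positivity)]
          exact Real.sqrt_le_sqrt h
        calc (∑ w' ∈ Ωs, ‖Shat w'‖) * Real.sqrt lam
            ≤ Real.sqrt B * normS * Real.sqrt lam := by
              exact mul_le_mul_of_nonneg_right hB (Real.sqrt_nonneg _)
          _ = Real.sqrt (B * lam) * normS := by
              rw [Real.sqrt_mul (by positivity)]; ring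
end

section
/- Let S : ℤ/Nℤ → ℂ satisfy S = Σ_{i=1}^{B} Ŝ(ω_i)φ_{ω_i} with distinct frequencies ω_i, and suppose χ_T has χ̂_T(0) = 1 and |χ̂_T(ω)| ≤ √λ for all ω ≠ 0. If for some frequency ω, |Ŝ(ω)|² > Bλ‖S‖², then the windowed signal S₁ = S·χ_T satisfies |Ŝ₁(ω)| ≥ |Ŝ(ω)| - √(Bλ)‖S‖ > 0; in particular ω remains a frequency with nonzero coefficient of S₁. -/
open Finset

/-- If `S` is supported on `B` frequencies, `χ̂_T(0) = 1`, `|χ̂_T(ω)| ≤ √λ` for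
`ω ≠ 0`, and `|Ŝ(ω)|² > Bλ‖S‖²` for some frequency `ω`, then the windowed signal
`S₁ = S·χ_T` satisfies `|Ŝ₁(ω)| ≥ |Ŝ(ω)| - √(Bλ)‖S‖ > 0`; in particular `ω`
remains a frequency with nonzero coefficient of `S₁`. -/
theorem stmt_19 (N B : ℕ) [NeZero N] (lam : ℝ) (hlam : 0 ≤ lam)
    (Shat χhat S1hat : ZMod N → ℂ)
    (Ωs : Finset (ZMod N)) (hcard : Ωs.card = B)
    (hsupp : ∀ w : ZMod N, w ∉ Ωs → Shat w = 0)
    (hχ0 : χhat 0 = 1)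
    (hχ : ∀ w : ZMod N, w ≠ 0 → ‖χhat w‖ ≤ Real.sqrt lam)
    (hS1 : ∀ w : ZMod N, S1hat w = ∑ w' ∈ Ωs, Shat w' * χhat (w - w'))
    (normS : ℝ) (hnorm : normS = Real.sqrt (∑ w ∈ Ωs, ‖Shat w‖ ^ 2))
    (ω : ZMod N)
    (hbig : ‖Shat ω‖ ^ 2 > B * lam * normS ^ 2) :
    ‖S1hat ω‖ ≥ ‖Shat ω‖ - Real.sqrt (B * lam) * normS ∧
    0 < ‖S1hat ω‖ := by
  have hnormS0 : 0 ≤ normS := hnorm ▸ Real.sqrt_nonneg _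
  have hω : ω ∈ Ωs := by
    by_contra h
    rw [hsupp ω h] at hbig
    simp at hbig
    exact absurd hbig (not_lt.mpr (by positivity))
  -- S1hat ω - Shat ω = sum over erase
  have hsplit : S1hat ω - Shat ω = ∑ w' ∈ Ωs.erase ω, Shat w' * χhat (ω - w') := by
    rw [hS1, ← Finset.sum_erase_add _ _ hω]
    simp [hχ0]
  -- bound the error
  have herr : ‖S1hat ω - Shat ω‖ ≤ Real.sqrt lam * ∑ w' ∈ Ωs, ‖Shat w'‖ := by
    rw [hsplit]
    calc ‖∑ w' ∈ Ωs.erase ω, Shat w' * χhat (ω - w')‖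
        ≤ ∑ w' ∈ Ωs.erase ω, ‖Shat w' * χhat (ω - w')‖ := by
          exact norm_sum_le _ _
      _ ≤ ∑ w' ∈ Ωs.erase ω, Real.sqrt lam * ‖Shat w'‖ := by
          apply Finset.sum_le_sum
          intro w' hw'
          rw [norm_mul, mul_comm]
          apply mul_le_mul_of_nonneg_right _ (norm_nonneg _)
          apply hχ
          have := Finset.ne_of_mem_erase hw'
          intro h; apply this; rwa [sub_eq_zero, eq_comm] at h
      _ = Real.sqrt lam * ∑ w' ∈ Ωs.erase ω, ‖Shat w'‖ := by
          rw [Finset.mul_sum]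
      _ ≤ Real.sqrt lam * ∑ w' ∈ Ωs, ‖Shat w'‖ := by
          apply mul_le_mul_of_nonneg_left _ (Real.sqrt_nonneg _)
          exact Finset.sum_le_sum_of_subset_of_nonneg (Finset.erase_subset _ _)
            (fun i _ _ => norm_nonneg _)
  -- Cauchy-Schwarz
  have hCS : ∑ w' ∈ Ωs, ‖Shat w'‖ ≤ Real.sqrt B * normS := by
    have h1 : (∑ w' ∈ Ωs, ‖Shat w'‖) ^ 2
        ≤ (Ωs.card : ℝ) * ∑ w' ∈ Ωs, ‖Shat w'‖ ^ 2 :=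
      sq_sum_le_card_mul_sum_sq
    have h2 : ∑ w' ∈ Ωs, ‖Shat w'‖
        = Real.sqrt ((∑ w' ∈ Ωs, ‖Shat w'‖) ^ 2) := by
      rw [Real.sqrt_sq (Finset.sum_nonneg fun i _ => norm_nonneg _)]
    rw [h2, hnorm, ← Real.sqrt_mul (Nat.cast_nonneg _)]
    apply Real.sqrt_le_sqrt
    rwa [hcard] at h1
  have herr2 : ‖S1hat ω - Shat ω‖ ≤ Real.sqrt (B * lam) * normS := by
    rw [Real.sqrt_mul (Nat.cast_nonneg _)]
    calc ‖S1hat ω - Shat ω‖ ≤ Real.sqrt lam * (Real.sqrt B * normS) :=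
          le_trans herr (mul_le_mul_of_nonneg_left hCS (Real.sqrt_nonneg _))
      _ = Real.sqrt B * Real.sqrt lam * normS := by ring
  have hlow : ‖Shat ω‖ - Real.sqrt (B * lam) * normS ≤ ‖S1hat ω‖ := by
    have h3 : ‖Shat ω‖ - ‖S1hat ω‖ ≤ ‖S1hat ω - Shat ω‖ := by
      have := abs_le.mp (abs_norm_sub_norm_le (Shat ω) (S1hat ω)) |>.2
      have h4 : ‖Shat ω - S1hat ω‖ = ‖S1hat ω - Shat ω‖ := by
        rw [← neg_sub, norm_neg]
      linarith
    linarith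
  have hstrict : Real.sqrt (B * lam) * normS < ‖Shat ω‖ := by
    apply lt_of_pow_lt_pow_left₀ 2 (norm_nonneg _)
    have : (Real.sqrt (B * lam) * normS) ^ 2 = B * lam * normS ^ 2 := by
      rw [mul_pow, Real.sq_sqrt (by positivity)]
    linarith
  exact ⟨hlow, lt_of_lt_of_le (by linarith) hlow⟩
end
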